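/- Let d ≥ 2 and define the polynomials H₃ = x₁^d − x₂^d, H_{2+i} = (x₁ + i·x₃)^d for i = 2,…,d, and H_{d+2+i} = (x₂ + i·x₃)^d for i = 1,…,d, in K[x₁,x₂,x₃] with char K = 0. Then d·(x₁ + x₃)^d = H₃ + ∑_{i=2}^{d} (−1)^i·C(d,i)·H_{i+2} − ∑_{i=1}^{d} (−1)^i·C(d,i)·H_{i+d+2}. -/

import Mathlib

open MvPolynomial Finset

open Function in
lemma fwd_pow_zero {R : Type*} [CommRing R] (h : R) :
    ∀ k d : ℕ, k < d → (fwdDiff h)^[d] (fun y : R => y ^ k) = 0 := by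
  intro k
  induction k using Nat.strong_induction_on with
  | _ k IH =>
    intro d hkd
    obtain ⟨n, rfl⟩ : ∃ n, d = n + 1 := ⟨d - 1, by omega⟩
    rw [iterate_succ_apply]
    have hΔ : fwdDiff h (fun y : R => y ^ k)
        = ∑ j ∈ range k, (h ^ (k - j) * (k.choose j : R)) • (fun y : R => y ^ j) := by
      ext y
      simp only [fwdDiff, Finset.sum_apply, Pi.smul_apply, smul_eq_mul]
      rw [add_pow]
      rw [Finset.sum_range_succ]
      simp only [Nat.sub_self, pow_zero, Nat.choose_self, Nat.cast_one, mul_one, one_mul,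
        add_sub_cancel_right]
      apply Finset.sum_congr rfl
      intro j hj
      ring
    rw [hΔ, fwdDiff_iter_finset_sum]
    apply Finset.sum_eq_zero
    intro j hj
    rw [fwdDiff_iter_const_smul, IH j (mem_range.mp hj) n (by have := mem_range.mp hj; omega), smul_zero]

lemma alt_sum_zero (d m : ℕ) (hm : m < d) :
    ∑ i ∈ range (d + 1), (-1 : ℤ) ^ i * (d.choose i : ℤ) * (i : ℤ) ^ m = 0 := by
  have h0 := fwdDiff_iter_eq_sum_shift (1 : ℤ) (fun y : ℤ => y ^ m) d 0
  rw [fwd_pow_zero (1 : ℤ) m d hm] at h0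
  simp only [Pi.zero_apply, smul_eq_mul, zero_add, nsmul_eq_mul, mul_one] at h0
  have h1 : ∑ i ∈ range (d + 1), (-1 : ℤ) ^ i * (d.choose i : ℤ) * (i : ℤ) ^ m
      = (-1 : ℤ) ^ d * ∑ k ∈ range (d + 1), ((-1 : ℤ) ^ (d - k) * (d.choose k : ℤ)) * (k : ℤ) ^ m := by
    rw [Finset.mul_sum]
    apply Finset.sum_congr rfl
    intro i hi
    have hi' : i ≤ d := by have := mem_range.mp hi; omega
    have hts : (-1 : ℤ) ^ (d - i) * (-1 : ℤ) ^ i = (-1 : ℤ) ^ d := by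
      rw [← pow_add, Nat.sub_add_cancel hi']
    have ht : (-1 : ℤ) ^ (d - i) * (-1 : ℤ) ^ (d - i) = 1 := by
      rw [← pow_add, ← two_mul, pow_mul, neg_one_sq, one_pow]
    linear_combination ((-1 : ℤ) ^ (d - i) * (d.choose i : ℤ) * (i : ℤ) ^ m) * hts
      - ((-1 : ℤ) ^ i * (d.choose i : ℤ) * (i : ℤ) ^ m) * ht
  rw [h1, ← h0, mul_zero]

lemma alt_sum_zero' {R : Type*} [CommRing R] (d m : ℕ) (hm : m < d) :
    ∑ i ∈ range (d + 1), (-1 : R) ^ i * (d.choose i : R) * (i : R) ^ m = 0 := by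
  have := congrArg (fun t : ℤ => (t : R)) (alt_sum_zero d m hm)
  push_cast at this
  exact this

lemma key_sum {R : Type*} [CommRing R] (d : ℕ) (hd : 1 ≤ d) (y z : R) :
    ∑ i ∈ range (d + 1), (-1 : R) ^ i * (d.choose i : R) * (y + (i : R) * z) ^ d
      = ∑ i ∈ range (d + 1), (-1 : R) ^ i * (d.choose i : R) * ((i : R) * z) ^ d := by
  have expand : ∀ i ∈ range (d + 1),
      (-1 : R) ^ i * (d.choose i : R) * (y + (i : R) * z) ^ d
        = ∑ k ∈ range (d + 1),
            ((-1 : R) ^ i * (d.choose i : R) * (i : R) ^ (d - k))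
              * (y ^ k * z ^ (d - k) * (d.choose k : R)) := by
    intro i _
    rw [add_pow, Finset.mul_sum]
    apply Finset.sum_congr rfl
    intro k _
    rw [mul_pow]
    ring
  rw [Finset.sum_congr rfl expand, Finset.sum_comm]
  rw [Finset.sum_eq_single 0]
  · simp only [pow_zero, one_mul, Nat.sub_zero, Nat.choose_zero_right, Nat.cast_one, mul_one]
    apply Finset.sum_congr rfl
    intro i _
    rw [mul_pow]
    ring
  · intro k hk hk0
    rw [← Finset.sum_mul, alt_sum_zero' d (d - k) (by have := mem_range.mp hk; omega), zero_mul]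
  · intro h
    exact absurd (mem_range.mpr (by omega)) h

lemma split_sum {M : Type*} [AddCommMonoid M] (f : ℕ → M) (a d : ℕ) (h : a ≤ d + 1) :
    ∑ i ∈ range (d + 1), f i = ∑ i ∈ range a, f i + ∑ i ∈ Icc a d, f i := by
  rw [← Finset.Ico_add_one_right_eq_Icc, range_eq_Ico, range_eq_Ico]
  exact (Finset.sum_Ico_consecutive f (Nat.zero_le a) h).symm

/-- For `d ≥ 2`, with `H₃ = x₁^d - x₂^d`, `H_{2+i} = (x₁ + i x₃)^d` for `2 ≤ i ≤ d` and
`H_{d+2+i} = (x₂ + i x₃)^d` for `1 ≤ i ≤ d`, we have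
`d (x₁ + x₃)^d = H₃ + ∑_{i=2}^d (-1)^i C(d,i) H_{i+2} - ∑_{i=1}^d (-1)^i C(d,i) H_{i+d+2}`. -/
theorem stmt13 (K : Type*) [Field K] [CharZero K] (d : ℕ) (hd : 2 ≤ d) :
    (d : MvPolynomial (Fin 3) K) * (X 0 + X 2) ^ d =
      (X 0 ^ d - X 1 ^ d)
      + ∑ i ∈ Icc 2 d, (-1 : MvPolynomial (Fin 3) K) ^ i *
          (d.choose i : MvPolynomial (Fin 3) K) *
          (X 0 + (i : MvPolynomial (Fin 3) K) * X 2) ^ d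
      - ∑ i ∈ Icc 1 d, (-1 : MvPolynomial (Fin 3) K) ^ i *
          (d.choose i : MvPolynomial (Fin 3) K) *
          (X 1 + (i : MvPolynomial (Fin 3) K) * X 2) ^ d := by
  have hA := key_sum d (by omega) (X 0 : MvPolynomial (Fin 3) K) (X 2)
  have hB := key_sum d (by omega) (X 1 : MvPolynomial (Fin 3) K) (X 2)
  have sA := split_sum (fun i => (-1 : MvPolynomial (Fin 3) K) ^ i *
      (d.choose i : MvPolynomial (Fin 3) K) *
      (X 0 + (i : MvPolynomial (Fin 3) K) * X 2) ^ d) 2 d (by omega)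
  have sB := split_sum (fun i => (-1 : MvPolynomial (Fin 3) K) ^ i *
      (d.choose i : MvPolynomial (Fin 3) K) *
      (X 1 + (i : MvPolynomial (Fin 3) K) * X 2) ^ d) 1 d (by omega)
  have h2 : ∀ f : ℕ → MvPolynomial (Fin 3) K, ∑ i ∈ range 2, f i = f 0 + f 1 := by
    intro f; rw [Finset.sum_range_succ, Finset.sum_range_one]
  have h1 : ∀ f : ℕ → MvPolynomial (Fin 3) K, ∑ i ∈ range 1, f i = f 0 := by
    intro f; exact Finset.sum_range_one (f := f)
  rw [h2] at sA
  rw [h1] at sB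
  simp only [Nat.choose_zero_right, Nat.choose_one_right, Nat.cast_zero, Nat.cast_one,
    pow_zero, pow_one, zero_mul, add_zero, one_mul, mul_one, zero_add] at sA sB
  linear_combination sA - hA + hB - sB
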